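/- Let z₀ ∈ ℂ with Im z₀ > 0, let F ∈ L²(σ) be complex-valued, and suppose ∫_ℝ F(λ)/(λ - z₀) dσ(λ) = 0. Define G(λ) = ((λ - z̄₀)/(λ - z₀))·F(λ). Then ∫_ℝ |G|² dσ = ∫_ℝ |F|² dσ, and for every z ∈ ℂ \ ℝ with z ≠ z₀, ∫_ℝ G(λ)/(λ - z) dσ(λ) = ((z - z̄₀)/(z - z₀)) · ∫_ℝ F(λ)/(λ - z) dσ(λ). (This is the de Branges division property of the spaces of Cauchy transforms used in Lemma 7.1.) -/

import Mathlib

open MeasureTheory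

/-- de Branges division property, Lemma 7.1: let `σ` be a positive
Borel measure on `ℝ` with `∫ (1+λ²)⁻¹ dσ < ∞`, `z₀` in the upper half-plane,
`F ∈ L²(σ)` with `∫ F(λ)/(λ-z₀) dσ = 0`, and `G(λ) = ((λ-z̄₀)/(λ-z₀)) F(λ)`.  Then
`∫ |G|² dσ = ∫ |F|² dσ` and for every non-real `z ≠ z₀`,
`∫ G(λ)/(λ-z) dσ = ((z-z̄₀)/(z-z₀)) ∫ F(λ)/(λ-z) dσ`. -/


lemma aux_ne (t : ℝ) (w : ℂ) (hw : w.im ≠ 0) : (t : ℂ) - w ≠ 0 := by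
  intro h
  apply hw
  have := congrArg Complex.im h
  simpa using this.symm

lemma aux_memL2 (σ : Measure ℝ)
    (hσ : (∫⁻ t : ℝ, ENNReal.ofReal ((1 + t ^ 2)⁻¹) ∂σ) < ⊤)
    (w : ℂ) (hw : w.im ≠ 0) :
    MemLp (fun t : ℝ => ((t : ℂ) - w)⁻¹) 2 σ := by
  have hcont : Continuous (fun t : ℝ => ((t : ℂ) - w)⁻¹) :=
    Continuous.inv₀ (by continuity) (fun t => aux_ne t w hw)
  have hmeas : AEStronglyMeasurable (fun t : ℝ => ((t : ℂ) - w)⁻¹) σ :=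
    hcont.aestronglyMeasurable
  rw [memLp_two_iff_integrable_sq_norm hmeas]
  set C : ℝ := 2 + (1 + 2 * w.re ^ 2) / w.im ^ 2 with hC
  have hiw : 0 < w.im ^ 2 := by positivity
  have hbound : ∀ t : ℝ, ‖((t : ℂ) - w)⁻¹‖ ^ 2 ≤ C * (1 + t ^ 2)⁻¹ := by
    intro t
    have hd : (0:ℝ) < (t - w.re) ^ 2 + w.im ^ 2 := by positivity
    have h1t : (0:ℝ) < 1 + t ^ 2 := by positivity
    have hnorm : ‖(t : ℂ) - w‖ ^ 2 = (t - w.re) ^ 2 + w.im ^ 2 := by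
      rw [← Complex.normSq_eq_norm_sq]
      simp only [Complex.normSq_apply, Complex.sub_re, Complex.sub_im, Complex.ofReal_re,
        Complex.ofReal_im]
      ring
    have key : 1 * (1 + t ^ 2) ≤ C * ((t - w.re) ^ 2 + w.im ^ 2) := by
      have hD1 : 1 ≤ ((t - w.re) ^ 2 + w.im ^ 2) / w.im ^ 2 := by
        rw [le_div_iff₀ hiw]; nlinarith [sq_nonneg (t - w.re)]
      have h2' : 1 + 2 * w.re ^ 2 ≤ ((1 + 2 * w.re ^ 2) / w.im ^ 2) * ((t - w.re) ^ 2 + w.im ^ 2) := by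
        calc 1 + 2 * w.re ^ 2 = (1 + 2 * w.re ^ 2) * 1 := by ring
          _ ≤ (1 + 2 * w.re ^ 2) * (((t - w.re) ^ 2 + w.im ^ 2) / w.im ^ 2) :=
              mul_le_mul_of_nonneg_left hD1 (by positivity)
          _ = ((1 + 2 * w.re ^ 2) / w.im ^ 2) * ((t - w.re) ^ 2 + w.im ^ 2) := by ring
      have h1 : 1 + t ^ 2 ≤ 1 + 2 * w.re ^ 2 + 2 * (t - w.re) ^ 2 := by
        nlinarith [sq_nonneg (t - 2 * w.re)]
      calc 1 * (1 + t ^ 2) = 1 + t ^ 2 := by ring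
        _ ≤ 1 + 2 * w.re ^ 2 + 2 * (t - w.re) ^ 2 := h1
        _ ≤ ((1 + 2 * w.re ^ 2) / w.im ^ 2) * ((t - w.re) ^ 2 + w.im ^ 2)
              + 2 * ((t - w.re) ^ 2 + w.im ^ 2) := by nlinarith
        _ = C * ((t - w.re) ^ 2 + w.im ^ 2) := by rw [hC]; ring
    calc ‖((t : ℂ) - w)⁻¹‖ ^ 2 = 1 / ((t - w.re) ^ 2 + w.im ^ 2) := by
          rw [norm_inv, inv_pow, hnorm, one_div]
      _ ≤ C / (1 + t ^ 2) := by rw [div_le_div_iff₀ hd h1t]; linarith [key]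
      _ = C * (1 + t ^ 2)⁻¹ := by rw [div_eq_mul_inv]
  have hint : Integrable (fun t : ℝ => C * (1 + t ^ 2)⁻¹) σ := by
    refine Integrable.const_mul ?_ C
    have hc2 : Continuous (fun t : ℝ => (1 + t ^ 2)⁻¹) :=
      Continuous.inv₀ (by continuity) (fun t => ne_of_gt (by positivity))
    refine ⟨hc2.aestronglyMeasurable, ?_⟩
    rw [hasFiniteIntegral_iff_ofReal (Filter.Eventually.of_forall fun t => by positivity)]
    exact hσ
  refine hint.mono' ((hcont.norm.pow 2).aestronglyMeasurable) ?_
  filter_upwards with t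
  rw [Real.norm_eq_abs, abs_of_nonneg (by positivity)]
  exact hbound t

lemma aux_int (σ : Measure ℝ)
    (hσ : (∫⁻ t : ℝ, ENNReal.ofReal ((1 + t ^ 2)⁻¹) ∂σ) < ⊤)
    (F : ℝ → ℂ) (hF : MemLp F 2 σ) (w : ℂ) (hw : w.im ≠ 0) :
    Integrable (fun t : ℝ => F t / ((t : ℂ) - w)) σ := by
  have h : MemLp ((fun t : ℝ => ((t : ℂ) - w)⁻¹) • F) 1 σ :=
    hF.smul (aux_memL2 σ hσ w hw) (hpqr := ⟨by rw [ENNReal.inv_two_add_inv_two, inv_one]⟩)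
  have := memLp_one_iff_integrable.mp h
  refine this.congr (Filter.Eventually.of_forall fun t => ?_)
  simp [Pi.smul_apply, smul_eq_mul, div_eq_mul_inv, mul_comm]

theorem stmt_14 (σ : Measure ℝ)
    (hσ : (∫⁻ t : ℝ, ENNReal.ofReal ((1 + t ^ 2)⁻¹) ∂σ) < ⊤)
    (z₀ : ℂ) (hz₀ : 0 < z₀.im)
    (F : ℝ → ℂ) (hF : MemLp F 2 σ)
    (h0 : ∫ t : ℝ, F t / ((t : ℂ) - z₀) ∂σ = 0)
    (G : ℝ → ℂ)
    (hG : ∀ t : ℝ, G t = (((t : ℂ) - starRingEnd ℂ z₀) / ((t : ℂ) - z₀)) * F t) :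
    (∫ t : ℝ, ‖G t‖ ^ 2 ∂σ = ∫ t : ℝ, ‖F t‖ ^ 2 ∂σ) ∧
    ∀ z : ℂ, z.im ≠ 0 → z ≠ z₀ →
      ∫ t : ℝ, G t / ((t : ℂ) - z) ∂σ
        = ((z - starRingEnd ℂ z₀) / (z - z₀)) * ∫ t : ℝ, F t / ((t : ℂ) - z) ∂σ := by
  have hz₀ne : z₀.im ≠ 0 := ne_of_gt hz₀
  have hratio : ∀ t : ℝ, ‖((t : ℂ) - starRingEnd ℂ z₀) / ((t : ℂ) - z₀)‖ = 1 := by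
    intro t
    have h1 : (t : ℂ) - starRingEnd ℂ z₀ = starRingEnd ℂ ((t : ℂ) - z₀) := by
      rw [map_sub, Complex.conj_ofReal]
    rw [norm_div, h1, RCLike.norm_conj,
      div_self (norm_ne_zero_iff.mpr (aux_ne t z₀ hz₀ne))]
  constructor
  · refine integral_congr_ae (Filter.Eventually.of_forall fun t => ?_)
    show ‖G t‖ ^ 2 = ‖F t‖ ^ 2
    rw [hG t, norm_mul, hratio t, one_mul]
  · intro z hz hzz
    have h3 : z - z₀ ≠ 0 := sub_ne_zero.mpr hzz
    have h4 : z₀ - z ≠ 0 := sub_ne_zero.mpr (Ne.symm hzz)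
    have hpt : ∀ t : ℝ, G t / ((t : ℂ) - z)
        = ((z₀ - starRingEnd ℂ z₀) / (z₀ - z)) * (F t / ((t : ℂ) - z₀))
          + ((z - starRingEnd ℂ z₀) / (z - z₀)) * (F t / ((t : ℂ) - z)) := by
      intro t
      have h1 := aux_ne t z₀ hz₀ne
      have h2 := aux_ne t z hz
      rw [hG t]
      field_simp
      ring
    rw [integral_congr_ae (Filter.Eventually.of_forall hpt),
      integral_add ((aux_int σ hσ F hF z₀ hz₀ne).const_mul _)
        ((aux_int σ hσ F hF z hz).const_mul _),
      integral_const_mul, integral_const_mul, h0, mul_zero, zero_add]
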